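/- For every RVT code word W, the entries of the Puiseux characteristic PC(W) = [λ₀; λ₁, …, λ_g] computed by the front-end recursion are strictly increasing: λ₀ < λ₁ < ⋯ < λ_g. -/

import Mathlib

/-- The three symbols of an RVT code word. -/
inductive RVT : Type
  | R | V | T
deriving DecidableEq, Repr

/-- Replace a leading run of `T`'s by `R`'s. -/
def deT : List RVT → List RVT
  | RVT.T :: xs => RVT.R :: deT xs
  | xs => xs

/-- If the word begins with `V`, replace that `V` and the immediately
following `T`'s by `R`'s. -/
def reg : List RVT → List RVT
  | RVT.V :: xs => RVT.R :: deT xs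
  | xs => xs

/-- The lifted word `L(W)`: remove the first symbol (an `R`), then replace a
leading maximal critical block `V Tᵗ` by `R^(t+1)`. -/
def lift (w : List RVT) : List RVT := reg w.tail

/-- Length of the leading run of `T`'s. -/
def countT : List RVT → ℕ
  | RVT.T :: xs => countT xs + 1
  | _ => 0

/-- Fueled version of the front-end recursion for the Puiseux characteristic
(Theorem PCfront): base case `[1]` on all-`R` words; given
`PC(L(W)) = [l0; l1, ..., lg]`,
(A) if `W` begins `RR` then `PC(W) = [l0; l1+l0, ..., lg+l0]`;
(B) if `W` begins `R V T^t R` or `W = R V T^t` then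
`PC(W) = [(t+2)l0; (t+3)l0, l1+l0, ..., lg+l0]`;
(C) if `W` begins `R V T^t V` then `PC(W) = [l1; l1+l0, ..., lg+l0]`. -/
def PCf : ℕ → List RVT → List ℕ
  | 0, _ => [1]
  | _ + 1, [] => [1]
  | fuel + 1, w@(_ :: rest) =>
    if w.all (· = RVT.R) then [1]
    else
      let p := PCf fuel (lift w)
      let l0 := p.headD 1
      let tl := p.tail
      match rest with
      | RVT.V :: xs =>
        match xs.drop (countT xs) with
        | RVT.V :: _ => tl.headD 1 :: tl.map (· + l0)                                -- case (C)
        | _ => ((countT xs + 2) * l0) :: ((countT xs + 3) * l0) :: tl.map (· + l0)   -- case (B)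
      | _ => l0 :: tl.map (· + l0)                                                   -- case (A)

/-- The Puiseux characteristic `PC(W)` computed by the front-end recursion. -/
def PC (w : List RVT) : List ℕ := PCf w.length w

/-- A valid RVT code word: begins with `R`, and `T` occurs only immediately
after a `V` or a `T`. -/
def ValidRVT (w : List RVT) : Prop :=
  w.head? = some RVT.R ∧
  ∀ i, w[i + 1]? = some RVT.T → (w[i]? = some RVT.V ∨ w[i]? = some RVT.T)

/-- The function `E` on strings, with `E_T[a;b] = [a;a+b]`, `E_V[a;b] = [b;a+b]`,
`E_R = E_T`, and base value `E(empty) = [1;2]`; the leftmost symbol acts last. -/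
def Efun : List RVT → ℕ × ℕ
  | [] => (1, 2)
  | RVT.V :: q => ((Efun q).2, (Efun q).1 + (Efun q).2)
  | _ :: q => ((Efun q).1, (Efun q).1 + (Efun q).2)

/-- The Euclidean-type recursion: `Euc(1,2)` is the empty word; for coprime
`a < b`, if `b < 2a` then `Euc(a,b) = V · Euc(b-a,a)`, and if `b > 2a` then
`Euc(a,b) = T · Euc(a,b-a)`. -/
def Euc (a b : ℕ) : List RVT :=
  if a = 1 ∧ b = 2 then []
  else if _h1 : 0 < a ∧ a < b ∧ b < 2 * a then RVT.V :: Euc (b - a) a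
  else if _h2 : 0 < a ∧ a < b ∧ 2 * a < b then RVT.T :: Euc a (b - a)
  else []
termination_by a + b
decreasing_by all_goals omega

def leadingR : List RVT → ℕ
  | RVT.R :: xs => leadingR xs + 1
  | _ => 0

lemma deT_eq (xs : List RVT) :
    deT xs = List.replicate (countT xs) RVT.R ++ xs.drop (countT xs) := by
  induction xs with
  | nil => simp [deT, countT]
  | cons x xs ih =>
    cases x with
    | T => simp [deT, countT, ih, List.replicate_succ]
    | R => simp [deT, countT]
    | V => simp [deT, countT]

lemma deT_length (xs : List RVT) : (deT xs).length = xs.length := by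
  induction xs with
  | nil => rfl
  | cons x xs ih => cases x <;> simp [deT, ih]

lemma lift_length (c : RVT) (rest : List RVT) :
    (lift (c :: rest)).length = rest.length := by
  cases rest with
  | nil => rfl
  | cons y ys => cases y <;> simp [lift, reg, deT_length]

lemma leadingR_replicate_append (n : ℕ) (l : List RVT) :
    leadingR (List.replicate n RVT.R ++ l) = n + leadingR l := by
  induction n with
  | zero => simp
  | succ n ih => simp [List.replicate_succ, leadingR, ih]; omega

lemma drop_countT_ne_T (xs : List RVT) (zs : List RVT) :
    xs.drop (countT xs) ≠ RVT.T :: zs := by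
  induction xs generalizing zs with
  | nil => simp [countT]
  | cons x xs ih =>
    cases x with
    | T => simpa [countT] using ih zs
    | R => simp [countT]
    | V => simp [countT]

lemma PCf_allR (fuel : ℕ) (w : List RVT) (h : w.all (· = RVT.R)) :
    PCf fuel w = [1] := by
  match fuel, w with
  | 0, _ => rfl
  | f + 1, [] => rfl
  | f + 1, x :: rest => simp only [PCf, if_pos h]

lemma PCf_A (fuel : ℕ) (c : RVT) (rest : List RVT)
    (h : ¬((c :: rest).all (· = RVT.R))) (hrest : ∀ xs, rest ≠ RVT.V :: xs) :
    PCf (fuel + 1) (c :: rest) =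
      (PCf fuel (lift (c :: rest))).headD 1 ::
        (PCf fuel (lift (c :: rest))).tail.map
          (· + (PCf fuel (lift (c :: rest))).headD 1) := by
  cases rest with
  | nil => simp only [PCf, if_neg h]
  | cons y ys =>
    cases y with
    | R => simp only [PCf, if_neg h]
    | T => simp only [PCf, if_neg h]
    | V => exact absurd rfl (hrest ys)

lemma PCf_C (fuel : ℕ) (c : RVT) (xs zs : List RVT)
    (h : ¬((c :: RVT.V :: xs).all (· = RVT.R)))
    (hd : xs.drop (countT xs) = RVT.V :: zs) :
    PCf (fuel + 1) (c :: RVT.V :: xs) =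
      (PCf fuel (lift (c :: RVT.V :: xs))).tail.headD 1 ::
        (PCf fuel (lift (c :: RVT.V :: xs))).tail.map
          (· + (PCf fuel (lift (c :: RVT.V :: xs))).headD 1) := by
  simp only [PCf, if_neg h, hd]

lemma PCf_B (fuel : ℕ) (c : RVT) (xs : List RVT)
    (h : ¬((c :: RVT.V :: xs).all (· = RVT.R)))
    (hd : ∀ zs, xs.drop (countT xs) ≠ RVT.V :: zs) :
    PCf (fuel + 1) (c :: RVT.V :: xs) =
      ((countT xs + 2) * (PCf fuel (lift (c :: RVT.V :: xs))).headD 1) ::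
        ((countT xs + 3) * (PCf fuel (lift (c :: RVT.V :: xs))).headD 1) ::
        (PCf fuel (lift (c :: RVT.V :: xs))).tail.map
          (· + (PCf fuel (lift (c :: RVT.V :: xs))).headD 1) := by
  rcases he : xs.drop (countT xs) with _ | ⟨y, zs⟩
  · simp only [PCf, if_neg h, he]
  · cases y with
    | R => simp only [PCf, if_neg h, he]
    | T => exact absurd he (drop_countT_ne_T xs zs)
    | V => exact absurd he (hd zs)

lemma chain'_map_add (k : ℕ) (l : List ℕ) (h : l.Chain' (· < ·)) :
    (l.map (· + k)).Chain' (· < ·) :=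
  List.isChain_map_of_isChain (· + k) (fun _ _ hab => by simpa using hab) h

lemma reg_eq_self (rest : List RVT) (h : ∀ xs, rest ≠ RVT.V :: xs) :
    reg rest = rest := by
  cases rest with
  | nil => rfl
  | cons y ys => cases y with
    | V => exact absurd rfl (h ys)
    | R => rfl
    | T => rfl

lemma leadingR_cons_le_one (c : RVT) (xs : List RVT) :
    leadingR (c :: RVT.V :: xs) ≤ 1 := by
  cases c <;> simp [leadingR]

/-- Case A of the induction. -/
lemma keyA (fuel : ℕ) (c : RVT) (rest : List RVT)
    (hall : ¬((c :: rest).all (· = RVT.R)))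
    (hrest : ∀ xs, rest ≠ RVT.V :: xs)
    (l0 : ℕ) (tl : List ℕ)
    (hp : PCf fuel (lift (c :: rest)) = l0 :: tl)
    (hchain : (l0 :: tl).Chain' (· < ·)) (hhead : 1 ≤ l0)
    (hsec : ∀ l1, (l0 :: tl)[1]? = some l1 → leadingR (lift (c :: rest)) * l0 < l1) :
    PCf (fuel + 1) (c :: rest) ≠ [] ∧ (PCf (fuel + 1) (c :: rest)).Chain' (· < ·) ∧
      1 ≤ (PCf (fuel + 1) (c :: rest)).headD 1 ∧
      ∀ l1, (PCf (fuel + 1) (c :: rest))[1]? = some l1 →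
        leadingR (c :: rest) * (PCf (fuel + 1) (c :: rest)).headD 1 < l1 := by
  have hliftrest : lift (c :: rest) = rest := by
    simp only [lift, List.tail_cons]; exact reg_eq_self rest hrest
  rw [PCf_A fuel c rest hall hrest, hp]
  simp only [List.headD_cons, List.tail_cons]
  refine ⟨by simp, ?_, by simpa using hhead, ?_⟩
  · cases tl with
    | nil => simp [List.Chain']
    | cons a tl' =>
      have h1 : l0 < a := (List.isChain_cons_cons.mp hchain).1
      simp only [List.map_cons]
      rw [List.Chain', List.isChain_cons_cons]
      refine ⟨by omega, ?_⟩
      simpa [List.Chain'] using chain'_map_add l0 (a :: tl') hchain.tail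
  · intro l1 h
    cases tl with
    | nil => simp at h
    | cons a tl' =>
      simp only [List.map_cons, List.getElem?_cons_succ, List.getElem?_cons_zero,
        Option.some.injEq] at h
      subst h
      have hs : leadingR rest * l0 < a := by
        have := hsec a (by simp)
        rwa [hliftrest] at this
      cases c with
      | R =>
        simp only [leadingR, List.headD_cons]
        rw [add_mul, one_mul]
        exact Nat.add_lt_add_right hs l0
      | V => simp only [leadingR, List.headD_cons]; omega
      | T => simp only [leadingR, List.headD_cons]; omega

/-- Case C of the induction. -/
lemma keyC (fuel : ℕ) (c : RVT) (xs zs : List RVT)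
    (hall : ¬((c :: RVT.V :: xs).all (· = RVT.R)))
    (hdr : xs.drop (countT xs) = RVT.V :: zs)
    (l0 : ℕ) (tl : List ℕ)
    (hp : PCf fuel (lift (c :: RVT.V :: xs)) = l0 :: tl)
    (hchain : (l0 :: tl).Chain' (· < ·)) (hhead : 1 ≤ l0) :
    PCf (fuel + 1) (c :: RVT.V :: xs) ≠ [] ∧
      (PCf (fuel + 1) (c :: RVT.V :: xs)).Chain' (· < ·) ∧
      1 ≤ (PCf (fuel + 1) (c :: RVT.V :: xs)).headD 1 ∧
      ∀ l1, (PCf (fuel + 1) (c :: RVT.V :: xs))[1]? = some l1 →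
        leadingR (c :: RVT.V :: xs) * (PCf (fuel + 1) (c :: RVT.V :: xs)).headD 1 < l1 := by
  rw [PCf_C fuel c xs zs hall hdr, hp]
  simp only [List.headD_cons, List.tail_cons]
  cases tl with
  | nil =>
    refine ⟨by simp, by simp [List.Chain'], by simp, ?_⟩
    intro l1 h; simp at h
  | cons a tl' =>
    have h1 : l0 < a := (List.isChain_cons_cons.mp hchain).1
    refine ⟨by simp, ?_, by simp; omega, ?_⟩
    · simp only [List.map_cons, List.headD_cons]
      rw [List.Chain', List.isChain_cons_cons]
      refine ⟨by omega, ?_⟩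
      simpa [List.Chain'] using chain'_map_add l0 (a :: tl') hchain.tail
    · intro l1 h
      simp only [List.map_cons, List.headD_cons, List.getElem?_cons_succ,
        List.getElem?_cons_zero, Option.some.injEq] at h
      subst h
      simp only [List.headD_cons]
      have hk := leadingR_cons_le_one c xs
      have : leadingR (c :: RVT.V :: xs) * a ≤ 1 * a :=
        Nat.mul_le_mul_right a hk
      omega

/-- Case B of the induction. -/
lemma keyB (fuel : ℕ) (c : RVT) (xs : List RVT)
    (hall : ¬((c :: RVT.V :: xs).all (· = RVT.R)))
    (hd : ∀ zs, xs.drop (countT xs) ≠ RVT.V :: zs)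
    (l0 : ℕ) (tl : List ℕ)
    (hp : PCf fuel (lift (c :: RVT.V :: xs)) = l0 :: tl)
    (hchain : (l0 :: tl).Chain' (· < ·)) (hhead : 1 ≤ l0)
    (hsec : ∀ l1, (l0 :: tl)[1]? = some l1 →
      leadingR (lift (c :: RVT.V :: xs)) * l0 < l1) :
    PCf (fuel + 1) (c :: RVT.V :: xs) ≠ [] ∧
      (PCf (fuel + 1) (c :: RVT.V :: xs)).Chain' (· < ·) ∧
      1 ≤ (PCf (fuel + 1) (c :: RVT.V :: xs)).headD 1 ∧
      ∀ l1, (PCf (fuel + 1) (c :: RVT.V :: xs))[1]? = some l1 →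
        leadingR (c :: RVT.V :: xs) * (PCf (fuel + 1) (c :: RVT.V :: xs)).headD 1 < l1 := by
  have hliftval : lift (c :: RVT.V :: xs) = RVT.R :: deT xs := by
    simp [lift, reg]
  rw [PCf_B fuel c xs hall hd, hp]
  simp only [List.headD_cons, List.tail_cons]
  have hsec2 : ∀ l1, (l0 :: tl)[1]? = some l1 →
      (countT xs + 2) * l0 < l1 := by
    intro l1 h
    have hs := hsec l1 h
    -- leadingR (lift w) ≥ countT xs + 2 unless drop is empty; handle both cases
    rcases he : xs.drop (countT xs) with _ | ⟨y, ys⟩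
    · -- lift w is all R's, so PCf of it is [1] and tl = []
      exfalso
      have hallR : (lift (c :: RVT.V :: xs)).all (· = RVT.R) := by
        rw [hliftval, deT_eq, he]
        simp [List.all_eq_true, List.eq_of_mem_replicate]
      have := PCf_allR fuel _ hallR
      rw [hp] at this
      injection this with h1 h2
      subst h2
      simp at h
    · cases y with
      | T => exact absurd he (drop_countT_ne_T xs ys)
      | V => exact absurd he (hd ys)
      | R =>
        have hlr : leadingR (lift (c :: RVT.V :: xs)) = countT xs + leadingR ys + 2 := by
          rw [hliftval, deT_eq, he]
          simp only [leadingR, leadingR_replicate_append]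
          omega
        rw [hlr] at hs
        have hmul : (countT xs + 2) * l0 ≤ (countT xs + leadingR ys + 2) * l0 :=
          Nat.mul_le_mul_right l0 (by omega)
        omega
  have hm : (countT xs + 2) * l0 < (countT xs + 3) * l0 := by nlinarith
  refine ⟨by simp, ?_, by nlinarith, ?_⟩
  · cases tl with
    | nil => simpa [List.Chain'] using hm
    | cons a tl' =>
      have h2 : (countT xs + 2) * l0 < a := hsec2 a (by simp)
      simp only [List.map_cons]
      rw [List.Chain', List.isChain_cons_cons, List.isChain_cons_cons]
      refine ⟨hm, ?_, ?_⟩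
      · have : (countT xs + 3) * l0 = (countT xs + 2) * l0 + l0 := by ring
        omega
      · simpa [List.Chain'] using chain'_map_add l0 (a :: tl') hchain.tail
  · intro l1 h
    simp only [List.getElem?_cons_succ, List.getElem?_cons_zero, Option.some.injEq] at h
    subst h
    have hk := leadingR_cons_le_one c xs
    have : leadingR (c :: RVT.V :: xs) * ((countT xs + 2) * l0) ≤ 1 * ((countT xs + 2) * l0) :=
      Nat.mul_le_mul_right _ hk
    omega

lemma key (fuel : ℕ) : ∀ (w : List RVT), w.length ≤ fuel →
    PCf fuel w ≠ [] ∧ (PCf fuel w).Chain' (· < ·) ∧ 1 ≤ (PCf fuel w).headD 1 ∧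
    ∀ l1, (PCf fuel w)[1]? = some l1 → leadingR w * (PCf fuel w).headD 1 < l1 := by
  induction fuel with
  | zero =>
    intro w _
    refine ⟨by simp [PCf], by simp [PCf, List.Chain'], by simp [PCf], fun l1 h => by simp [PCf] at h⟩
  | succ fuel ih =>
    intro w hlen
    match w with
    | [] =>
      refine ⟨by simp [PCf], by simp [PCf, List.Chain'], by simp [PCf], fun l1 h => by simp [PCf] at h⟩
    | c :: rest =>
      by_cases hall : (c :: rest).all (· = RVT.R)
      · rw [PCf_allR _ _ hall]
        exact ⟨by simp, by simp [List.Chain'], by simp, fun l1 h => by simp at h⟩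
      · have hlift : (lift (c :: rest)).length ≤ fuel := by
          rw [lift_length]
          simp only [List.length_cons] at hlen
          omega
        obtain ⟨hne, hchain, hhead, hsec⟩ := ih (lift (c :: rest)) hlift
        obtain ⟨l0, tl, hp⟩ := List.exists_cons_of_ne_nil hne
        rw [hp] at hchain hhead hsec
        simp only [List.headD_cons] at hhead hsec
        cases rest with
        | nil => exact keyA fuel c [] hall (by simp) l0 tl hp hchain hhead hsec
        | cons y xs2 =>
          cases y with
          | R => exact keyA fuel c (RVT.R :: xs2) hall (by simp) l0 tl hp hchain hhead hsec
          | T => exact keyA fuel c (RVT.T :: xs2) hall (by simp) l0 tl hp hchain hhead hsec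
          | V =>
            rcases hdr : xs2.drop (countT xs2) with _ | ⟨y2, zs⟩
            · exact keyB fuel c xs2 hall (by rw [hdr]; simp) l0 tl hp hchain hhead hsec
            · cases y2 with
              | V => exact keyC fuel c xs2 zs hall hdr l0 tl hp hchain hhead
              | R => exact keyB fuel c xs2 hall (by rw [hdr]; simp) l0 tl hp hchain hhead hsec
              | T => exact absurd hdr (drop_countT_ne_T xs2 zs)

/-- The entries of the Puiseux characteristic of any RVT code word are
strictly increasing. -/
theorem statement2 (W : List RVT) (hW : ValidRVT W) :
    (PC W).Chain' (· < ·) := by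
  rw [PC]
  exact (key W.length W le_rfl).2.1
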